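/- (Kantorovich inequality) Let Z be positive definite with largest eigenvalue a and smallest eigenvalue b, and let h be a unit vector. Then ⟨h, Zh⟩ · ⟨h, Z⁻¹h⟩ ≤ (a+b)²/(4ab). -/

import Mathlib

open scoped ComplexOrder

open Finset in
lemma kant_inner_eq (n : ℕ) (v : OrthonormalBasis (Fin n) ℂ (EuclideanSpace ℂ (Fin n)))
    (T : EuclideanSpace ℂ (Fin n) →L[ℂ] EuclideanSpace ℂ (Fin n)) (μ : Fin n → ℝ)
    (hT : ∀ i, T (v i) = (μ i : ℂ) • v i) (h : EuclideanSpace ℂ (Fin n)) :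
    (inner ℂ h (T h) : ℂ).re = ∑ i, μ i * ‖v.repr h i‖ ^ 2 := by
  have e1 : (inner ℂ h (T h) : ℂ) = ∑ i, (μ i : ℂ) * ((‖v.repr h i‖ ^ 2 : ℝ) : ℂ) := by
    nth_rewrite 2 [← v.sum_repr h]
    rw [map_sum, inner_sum]
    refine Finset.sum_congr rfl fun i _ => ?_
    rw [map_smul, hT i, inner_smul_right, inner_smul_right,
      ← inner_conj_symm h (v i), ← v.repr_apply_apply]
    rw [mul_comm (v.repr h i) _, mul_assoc, mul_comm ((starRingEnd ℂ) (v.repr h i)) (v.repr h i), Complex.mul_conj, Complex.normSq_eq_norm_sq]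
  rw [e1, Complex.re_sum]
  refine Finset.sum_congr rfl fun i _ => ?_
  rw [← Complex.ofReal_mul, Complex.ofReal_re]

theorem stmt_9 (n : ℕ) (Z : Matrix (Fin n) (Fin n) ℂ) (hZ : Z.PosDef) (a b : ℝ)
    (ha : ∀ i, hZ.1.eigenvalues i ≤ a) (ha' : ∃ i, hZ.1.eigenvalues i = a)
    (hb : ∀ i, b ≤ hZ.1.eigenvalues i) (hb' : ∃ i, hZ.1.eigenvalues i = b)
    (h : EuclideanSpace ℂ (Fin n)) (hh : ‖h‖ = 1) :
    (inner ℂ h (Matrix.toEuclideanCLM (𝕜 := ℂ) Z h) : ℂ).re *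
        (inner ℂ h (Matrix.toEuclideanCLM (𝕜 := ℂ) Z⁻¹ h) : ℂ).re ≤
      (a + b) ^ 2 / (4 * a * b) := by
  classical
  set v := hZ.1.eigenvectorBasis with hv
  set μ := hZ.1.eigenvalues with hμ
  have hμpos : ∀ i, 0 < μ i := hZ.eigenvalues_pos
  obtain ⟨ib, hib⟩ := hb'
  have hb0 : 0 < b := hib ▸ hμpos ib
  have hba : b ≤ a := hib ▸ ha ib
  have ha0 : 0 < a := lt_of_lt_of_le hb0 hba
  -- eigen relation for Z
  have hZv : ∀ i, Matrix.toEuclideanCLM (𝕜 := ℂ) Z (v i) = (μ i : ℂ) • v i := by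
    intro i
    have h1 := hZ.1.mulVec_eigenvectorBasis i
    apply (WithLp.equiv 2 _).injective
    ext j
    have h2 : (Z.mulVec ⇑(v i)) j = (μ i • ⇑(v i)) j := by rw [h1]
    simpa [Matrix.ofLp_toEuclideanCLM, Matrix.toLin'_apply, Complex.real_smul]
      using h2
  -- eigen relation for Z⁻¹
  have hinv : Z⁻¹ * Z = 1 :=
    Matrix.nonsing_inv_mul Z ((Matrix.isUnit_iff_isUnit_det Z).mp hZ.isUnit)
  have hZiv : ∀ i, Matrix.toEuclideanCLM (𝕜 := ℂ) Z⁻¹ (v i) = ((μ i)⁻¹ : ℝ) • v i := by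
    intro i
    have h1 : Matrix.toEuclideanCLM (𝕜 := ℂ) Z⁻¹ (Matrix.toEuclideanCLM (𝕜 := ℂ) Z (v i))
        = v i := by
      rw [← ContinuousLinearMap.comp_apply, ← ContinuousLinearMap.mul_def,
        ← map_mul, hinv, map_one, ContinuousLinearMap.one_apply]
    rw [hZv i, map_smul] at h1
    have hne : (μ i : ℂ) ≠ 0 := by exact_mod_cast (hμpos i).ne'
    calc Matrix.toEuclideanCLM (𝕜 := ℂ) Z⁻¹ (v i)
        = ((μ i : ℂ)⁻¹ * (μ i : ℂ)) • Matrix.toEuclideanCLM (𝕜 := ℂ) Z⁻¹ (v i) := by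
          rw [inv_mul_cancel₀ hne, one_smul]
      _ = (μ i : ℂ)⁻¹ • ((μ i : ℂ) • Matrix.toEuclideanCLM (𝕜 := ℂ) Z⁻¹ (v i)) := by
          rw [mul_smul]
      _ = ((μ i)⁻¹ : ℝ) • v i := by
          rw [h1]; norm_cast
  -- weights
  set w : Fin n → ℝ := fun i => ‖v.repr h i‖ ^ 2 with hw
  have hwnn : ∀ i, 0 ≤ w i := fun i => sq_nonneg _
  have hwsum : ∑ i, w i = 1 := by
    have h1 : ‖v.repr h‖ = 1 := by rw [v.repr.norm_map, hh]
    have h2 : ‖v.repr h‖ ^ 2 = ∑ i, ‖v.repr h i‖ ^ 2 := by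
      rw [EuclideanSpace.norm_eq, Real.sq_sqrt (Finset.sum_nonneg fun i _ => sq_nonneg _)]
    rw [hw]; rw [← h2, h1]; norm_num
  have eT := kant_inner_eq n v _ μ hZv h
  have eS := kant_inner_eq n v _ (fun i => (μ i)⁻¹)
    (by intro i; rw [hZiv i]; norm_cast) h
  rw [eT, eS]
  set T := ∑ i, μ i * w i with hT
  set S := ∑ i, (μ i)⁻¹ * w i with hS
  have hTlb : b ≤ T := by
    calc b = ∑ i, b * w i := by rw [← Finset.mul_sum, hwsum, mul_one]
      _ ≤ T := Finset.sum_le_sum fun i _ => mul_le_mul_of_nonneg_right (hb i) (hwnn i)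
  have hTub : T ≤ a := by
    calc T ≤ ∑ i, a * w i :=
        Finset.sum_le_sum fun i _ => mul_le_mul_of_nonneg_right (ha i) (hwnn i)
      _ = a := by rw [← Finset.mul_sum, hwsum, mul_one]
  have hSnn : 0 ≤ S :=
    Finset.sum_nonneg fun i _ => mul_nonneg (inv_nonneg.mpr (hμpos i).le) (hwnn i)
  have hSub : S ≤ (a + b - T) / (a * b) := by
    have step : ∀ i, (μ i)⁻¹ * w i ≤ (a + b - μ i) / (a * b) * w i := by
      intro i
      refine mul_le_mul_of_nonneg_right ?_ (hwnn i)
      rw [inv_eq_one_div, div_le_div_iff₀ (hμpos i) (by positivity)]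
      nlinarith [hb i, ha i, hμpos i]
    calc S ≤ ∑ i, (a + b - μ i) / (a * b) * w i := Finset.sum_le_sum fun i _ => step i
      _ = (a + b - T) / (a * b) := by
          simp only [div_mul_eq_mul_div, ← Finset.sum_div, sub_mul]
          rw [Finset.sum_sub_distrib, ← Finset.mul_sum, hwsum, mul_one]
  have hSub' : S * (a * b) ≤ a + b - T := by
    have := mul_le_mul_of_nonneg_right hSub (le_of_lt (by positivity : (0:ℝ) < a * b))
    rwa [div_mul_cancel₀ _ (by positivity : (a*b) ≠ 0)] at this
  rw [le_div_iff₀ (by positivity : (0:ℝ) < 4 * a * b)]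
  have hT0 : 0 < T := lt_of_lt_of_le hb0 hTlb
  nlinarith [mul_le_mul_of_nonneg_left hSub' hT0.le, sq_nonneg (a + b - 2 * T),
    mul_nonneg hSnn hT0.le]
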